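/- For the Filipstov system ẋ = 6(1+a)x + 2y − 6(2+a)x² + 12xy, ẏ = 15(1+a)y + 3a(1+a)x² − 2(9+5a)xy + 16y², the quartic f(x,y) = 3(1+a)(ax² + y)² + 2y²(2y − 3(1+a)x) is an invariant algebraic curve; that is, P·f_x + Q·f_y = k·f for some polynomial cofactor k(x,y). -/

import Mathlib

/-- For Filipstov's system `ẋ = 6(1+a)x + 2y − 6(2+a)x² + 12xy`,
`ẏ = 15(1+a)y + 3a(1+a)x² − 2(9+5a)xy + 16y²` with `0 < a < 3/13`, the quartic
`f(x,y) = 3(1+a)(ax² + y)² + 2y²(2y − 3(1+a)x)` defines an invariant algebraic curve: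
`P·f_x + Q·f_y = k·f` for some polynomial cofactor `k`. -/
theorem stmt_11 (a : ℝ) (ha1 : 0 < a) (ha2 : a < 3 / 13)
    (P Q f : ℝ × ℝ → ℝ)
    (hP : ∀ p : ℝ × ℝ, P p = 6 * (1 + a) * p.1 + 2 * p.2 - 6 * (2 + a) * p.1 ^ 2
      + 12 * p.1 * p.2)
    (hQ : ∀ p : ℝ × ℝ, Q p = 15 * (1 + a) * p.2 + 3 * a * (1 + a) * p.1 ^ 2
      - 2 * (9 + 5 * a) * p.1 * p.2 + 16 * p.2 ^ 2)
    (hf : ∀ p : ℝ × ℝ, f p = 3 * (1 + a) * (a * p.1 ^ 2 + p.2) ^ 2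
      + 2 * p.2 ^ 2 * (2 * p.2 - 3 * (1 + a) * p.1)) :
    ∃ k : MvPolynomial (Fin 2) ℝ,
      ∀ p : ℝ × ℝ, P p * fderiv ℝ f p (1, 0) + Q p * fderiv ℝ f p (0, 1)
        = MvPolynomial.eval ![p.1, p.2] k * f p := by

  have hfe : f = fun p : ℝ × ℝ => 3 * (1 + a) * (a * p.1 ^ 2 + p.2) ^ 2
      + 2 * p.2 ^ 2 * (2 * p.2 - 3 * (1 + a) * p.1) := funext hf
  subst hfe
  refine ⟨MvPolynomial.C (30 * (1 + a)) + MvPolynomial.C (-(48 + 24 * a)) * MvPolynomial.X 0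
      + MvPolynomial.C 48 * MvPolynomial.X 1, fun p => ?_⟩
  have hx2 : HasFDerivAt (fun p : ℝ × ℝ => p.1 ^ 2)
      (p.1 • ContinuousLinearMap.fst ℝ ℝ ℝ + p.1 • ContinuousLinearMap.fst ℝ ℝ ℝ) p := by
    simpa [pow_two] using (hasFDerivAt_fst (p := p)).fun_mul (hasFDerivAt_fst (p := p))
  have h1 : HasFDerivAt (fun p : ℝ × ℝ => a * p.1 ^ 2 + p.2)
      (a • (p.1 • ContinuousLinearMap.fst ℝ ℝ ℝ + p.1 • ContinuousLinearMap.fst ℝ ℝ ℝ)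
        + ContinuousLinearMap.snd ℝ ℝ ℝ) p :=
    (hx2.const_mul a).add (hasFDerivAt_snd (p := p))
  have hin2 := h1.fun_mul h1
  rw [show (fun p : ℝ × ℝ => (a * p.1 ^ 2 + p.2) * (a * p.1 ^ 2 + p.2))
      = (fun p : ℝ × ℝ => (a * p.1 ^ 2 + p.2) ^ 2) from funext fun p => (pow_two _).symm] at hin2
  have h2 := hin2.const_mul (3 * (1 + a))
  have hy2 : HasFDerivAt (fun p : ℝ × ℝ => p.2 ^ 2)
      (p.2 • ContinuousLinearMap.snd ℝ ℝ ℝ + p.2 • ContinuousLinearMap.snd ℝ ℝ ℝ) p := by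
    simpa [pow_two] using (hasFDerivAt_snd (p := p)).fun_mul (hasFDerivAt_snd (p := p))
  have h3 := hy2.const_mul (2 : ℝ)
  have h4 : HasFDerivAt (fun p : ℝ × ℝ => 2 * p.2 - 3 * (1 + a) * p.1)
      ((2 : ℝ) • ContinuousLinearMap.snd ℝ ℝ ℝ
        - (3 * (1 + a)) • ContinuousLinearMap.fst ℝ ℝ ℝ) p :=
    ((hasFDerivAt_snd (p := p)).const_mul 2).sub
      ((hasFDerivAt_fst (p := p)).const_mul (3 * (1 + a)))
  have h5 := h2.fun_add (h3.fun_mul h4)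
  rw [h5.fderiv]
  simp only [ContinuousLinearMap.add_apply, ContinuousLinearMap.smul_apply,
    ContinuousLinearMap.sub_apply, ContinuousLinearMap.coe_fst', ContinuousLinearMap.coe_snd',
    smul_eq_mul, hP, hQ, MvPolynomial.eval_add, MvPolynomial.eval_mul, MvPolynomial.eval_C,
    MvPolynomial.eval_X, Matrix.cons_val_zero, Matrix.cons_val_one, Matrix.head_cons]
  ring
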